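/- A unary semigroup S satisfies all the identities of Σ_ref if and only if S satisfies every unary semigroup identity u ≈ v (u, v unary semigroup words over a countably infinite alphabet X) that holds in the adjacency semigroup A(H) of every reflexive graph H. In other words, Σ_ref is an identity basis for the variety of unary semigroups generated by the adjacency semigroups of all reflexive graphs. -/

import Mathlib

/-- Multiplication of the adjacency semigroup `A(G)` of a graph `G = ⟨V; r⟩`:
the carrier is `Option (V × V)` with `none` playing the role of the zero element. -/
noncomputable def adjMul {V : Type*} (r : V → V → Prop) :
    Option (V × V) → Option (V × V) → Option (V × V)
  | some (x, y), some (z, t) =>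
      @ite _ (r y z) (Classical.propDecidable _) (some (x, t)) none
  | _, _ => none

/-- Reversion in the adjacency semigroup: `(x,y)' = (y,x)` and `0' = 0`. -/
def adjStar {V : Type*} : Option (V × V) → Option (V × V)
  | some (x, y) => some (y, x)
  | none => none

/-- Unary semigroup words over an alphabet `X`: letters, products, and reversals. -/
inductive UWord (X : Type*) where
  | letter : X → UWord X
  | mul : UWord X → UWord X → UWord X
  | star : UWord X → UWord X

namespace UWord

variable {X : Type*}

/-- Evaluation of a unary semigroup word in a unary semigroup under an
assignment of the letters. -/
def eval {S : Type*} [Mul S] [Star S] (θ : X → S) : UWord X → S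
  | .letter x => θ x
  | .mul u v => eval θ u * eval θ v
  | .star u => Star.star (eval θ u)

/-- Evaluation of a unary semigroup word in the adjacency semigroup of the
graph `⟨V; r⟩` under an assignment `θ` of the letters. -/
noncomputable def evalA {V : Type*} (r : V → V → Prop) (θ : X → Option (V × V)) :
    UWord X → Option (V × V)
  | .letter x => θ x
  | .mul u v => adjMul r (evalA r θ u) (evalA r θ v)
  | .star u => adjStar (evalA r θ u)

/-- The set of letters occurring in a word. -/
def letters : UWord X → Set X
  | .letter x => {x}
  | .mul u v => letters u ∪ letters v
  | .star u => letters u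

/-- Vertices of the graph `G[u]` of a word: `(x, false)` is the left vertex
`ℓ_x` and `(x, true)` is the right vertex `r_x` of the letter `x`. -/
abbrev Vtx (X : Type*) := X × Bool

/-- The pair (initial vertex, final vertex) of the graph `G[u]` of a word `u`. -/
def ends : UWord X → Vtx X × Vtx X
  | .letter x => ((x, false), (x, true))
  | .mul u v => ((ends u).1, (ends v).2)
  | .star u => ((ends u).2, (ends u).1)

/-- The edge set of the graph `G[u]` of a word `u`. -/
def edges : UWord X → Set (Vtx X × Vtx X)
  | .letter _ => ∅
  | .mul u v => edges u ∪ edges v ∪ {((ends u).2, (ends v).1)}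
  | .star u => edges u

end UWord

/-- Given an assignment `θ` of letters to (nonzero) pairs, the vertex `ℓ_x`
corresponds to the left coordinate `i_x` of `θ x`, and the vertex `r_x` to the
right coordinate `j_x`. -/
def coordOf {X V : Type*} (θ : X → V × V) : UWord.Vtx X → V
  | (x, false) => (θ x).1
  | (x, true) => (θ x).2



structure SigmaRef (S : Type*) [Semigroup S] [Star S] : Prop where
  inv : ∀ x : S, star (star x) = x
  law2 : ∀ x y z : S, x * star (y * z) = star (y * star (x * star z))
  law3 : ∀ x y z : S, star (x * y) * z = star (star (star x * z) * y)
  reg : ∀ x : S, x * star x * x = x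
  proj : ∀ x : S, star (x * star x) = x * star x
  cube : ∀ x : S, x * x * x = x * x
  law7 : ∀ x y z : S, x * y * x * z * x = x * z * x * y * x * z * x
  law8 : ∀ x y z : S, x * z * x * y * x * z * x = x * z * x * y * x

namespace SigmaRef

variable {S : Type*} [Semigroup S] [Star S] (H : SigmaRef S)

include H

/-- x' x x' = x' -/
lemma reg' (x : S) : star x * x * star x = star x := by
  have := H.reg (star x); rwa [H.inv] at this

/-- (x'x)' = x'x -/
lemma proj' (x : S) : star (star x * x) = star x * x := by
  have := H.proj (star x); rwa [H.inv] at this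

lemma idemL (x : S) : (x * star x) * (x * star x) = x * star x := by
  have h := H.reg x
  calc (x * star x) * (x * star x) = x * star x * x * star x := by
        simp only [mul_assoc]
      _ = x * star x := by rw [h]

lemma idemR (x : S) : (star x * x) * (star x * x) = star x * x := by
  have h := H.reg' x
  calc (star x * x) * (star x * x) = star x * x * star x * x := by
        simp only [mul_assoc]
      _ = star x * x := by rw [h]

/-- v idempotent self-adjoint, p * v = p ⟹ v * p' = p' -/
lemma vstar (v p : S) (hv : v * v = v) (hvs : star v = v) (hp : p * v = p) :
    v * star p = star p := by
  have h2 := H.law2 v p v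
  rw [hvs, hv, hp] at h2
  rw [hvs, hp] at h2
  exact h2

/-- v idempotent self-adjoint, v * p = p ⟹ p' * v = p' -/
lemma starv (v p : S) (hv : v * v = v) (hvs : star v = v) (hp : v * p = p) :
    star p * v = star p := by
  have h3 := H.law3 v p v
  rw [hvs, hv, hp] at h3
  rw [hvs, hp] at h3
  exact h3

/-- reversal of a padded product -/
lemma revmul (v p q : S) (hv : v * v = v) (hvs : star v = v)
    (hp : p * v = p) (hq : v * q = q) :
    star (p * q) = star q * star p := by
  have h3 := H.law3 v q (star p)
  rw [hvs] at h3
  rw [H.vstar v p hv hvs hp] at h3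
  rw [H.inv] at h3
  rw [hq] at h3
  exact h3.symm


omit H in
lemma bordered_eq (e a : S) (h1 : e * a = a) (h2 : a * e = a) : e * (a * e) = a := by
  rw [h2, h1]

lemma bordered_comm (e a b : S) (he : e * e = e)
    (ha1 : e * a = a) (ha2 : a * e = a) (hb1 : e * b = b) (hb2 : b * e = b) :
    a * b = b * a := by
  have he' : ∀ x : S, e * (e * x) = e * x := by
    intro x; rw [← mul_assoc, he]
  have h7' := H.law7 e a b
  have h8' := H.law8 e a b
  simp only [mul_assoc] at h7' h8'
  -- h7' : e*(a*(e*(b*e))) = e*(b*(e*(a*(e*(b*e)))))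
  -- h8' : e*(b*(e*(a*(e*(b*e))))) = e*(b*(e*(a*e)))
  calc a * b = (e * (a * e)) * (e * (b * e)) := by
        rw [bordered_eq e a ha1 ha2, bordered_eq e b hb1 hb2]
      _ = e * (a * (e * (b * e))) := by simp only [mul_assoc, he']
      _ = e * (b * (e * (a * e))) := by rw [h7', h8']
      _ = (e * (b * e)) * (e * (a * e)) := by simp only [mul_assoc, he']
      _ = b * a := by rw [bordered_eq e a ha1 ha2, bordered_eq e b hb1 hb2]

lemma bordered_idem (e a : S) (he : e * e = e)
    (ha1 : e * a = a) (ha2 : a * e = a) : a * a = a := by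
  have he' : ∀ x : S, e * (e * x) = e * x := by
    intro x; rw [← mul_assoc, he]
  have h8' := H.law8 e e a
  simp only [mul_assoc] at h8'
  simp only [he', he] at h8'
  -- h8' : e*(a*(e*(a*e))) = e*(a*(e*e)) ??
  calc a * a = (e * (a * e)) * (e * (a * e)) := by
        rw [bordered_eq e a ha1 ha2]
      _ = e * (a * (e * (a * e))) := by simp only [mul_assoc, he']
      _ = a := by rw [h8']; exact bordered_eq e a ha1 ha2

end SigmaRef


abbrev Vx := ℕ × Bool

inductive Stp where
  | seg (x : ℕ) (d : Bool)
  | edg (a b : Vx) (d : Bool)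

def Stp.src : Stp → Vx
  | .seg x d => (x, !d)
  | .edg a b d => if d then a else b

def Stp.dst : Stp → Vx
  | .seg x d => (x, d)
  | .edg a b d => if d then b else a

def Stp.item : Stp → ℕ ⊕ (Vx × Vx)
  | .seg x _ => .inl x
  | .edg a b _ => .inr (a, b)

def Stp.rev : Stp → Stp
  | .seg x d => .seg x (!d)
  | .edg a b d => .edg a b (!d)

@[simp] lemma Stp.src_rev (t : Stp) : t.rev.src = t.dst := by
  cases t with
  | seg x d => simp [Stp.rev, Stp.src, Stp.dst]
  | edg a b d => cases d <;> simp [Stp.rev, Stp.src, Stp.dst]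

@[simp] lemma Stp.dst_rev (t : Stp) : t.rev.dst = t.src := by
  cases t with
  | seg x d => simp [Stp.rev, Stp.src, Stp.dst]
  | edg a b d => cases d <;> simp [Stp.rev, Stp.src, Stp.dst]

@[simp] lemma Stp.item_rev (t : Stp) : t.rev.item = t.item := by
  cases t <;> simp [Stp.rev, Stp.item]

section Sval

variable {S : Type*} [Semigroup S] [Star S] (θ : ℕ → S)

def el (v : Vx) : S := if v.2 then star (θ v.1) * θ v.1 else θ v.1 * star (θ v.1)

def Stp.sval : Stp → S
  | .seg x d => if d then θ x else star (θ x)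
  | .edg a b d => if d then el θ a * el θ b else star (el θ a * el θ b)

variable (H : SigmaRef S)
include H

lemma el_idem (v : Vx) : el θ v * el θ v = el θ v := by
  rcases v with ⟨x, b⟩
  cases b
  · simpa [el] using H.idemL (θ x)
  · simpa [el] using H.idemR (θ x)

lemma el_star (v : Vx) : star (el θ v) = el θ v := by
  rcases v with ⟨x, b⟩
  cases b
  · simpa [el] using H.proj (θ x)
  · simpa [el] using H.proj' (θ x)

lemma sval_rev (t : Stp) : t.rev.sval θ = star (t.sval θ) := by
  cases t with
  | seg x d =>
      cases d <;> simp only [Stp.rev, Stp.sval, Bool.not_true, Bool.not_false,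
        Bool.false_eq_true, if_false, if_true]
      exact (H.inv (θ x)).symm
  | edg a b d =>
      cases d <;> simp only [Stp.rev, Stp.sval, Bool.not_true, Bool.not_false,
        Bool.false_eq_true, if_false, if_true]
      exact (H.inv _).symm

lemma step_absorbL (t : Stp) : el θ t.src * t.sval θ = t.sval θ := by
  cases t with
  | seg x d =>
      cases d <;> simp only [Stp.src, Stp.sval, el, Bool.not_true, Bool.not_false,
        Bool.false_eq_true, if_false, if_true]
      · exact H.reg' (θ x)
      · exact H.reg (θ x)
  | edg a b d =>
      cases d <;> simp only [Stp.src, Stp.sval, Bool.false_eq_true, if_false, if_true]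
      · exact H.vstar _ _ (el_idem θ H b) (el_star θ H b)
          (by rw [mul_assoc, el_idem θ H b])
      · rw [← mul_assoc, el_idem θ H a]

lemma step_absorbR (t : Stp) : t.sval θ * el θ t.dst = t.sval θ := by
  cases t with
  | seg x d =>
      cases d <;> simp only [Stp.dst, Stp.sval, el, Bool.false_eq_true, if_false, if_true]
      · rw [← mul_assoc]; exact H.reg' (θ x)
      · rw [← mul_assoc]; exact H.reg (θ x)
  | edg a b d =>
      cases d <;> simp only [Stp.dst, Stp.sval, Bool.false_eq_true, if_false, if_true]
      · exact H.starv _ _ (el_idem θ H a) (el_star θ H a)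
          (by rw [← mul_assoc, el_idem θ H a])
      · rw [mul_assoc, el_idem θ H b]

end Sval

inductive Wlk : Vx → Vx → Type
  | single (t : Stp) : Wlk t.src t.dst
  | snoc {a b : Vx} (w : Wlk a b) (t : Stp) (h : b = t.src) : Wlk a t.dst

namespace Wlk

def cst {a b a' b' : Vx} (h1 : a = a') (h2 : b = b') (w : Wlk a b) : Wlk a' b' :=
  h1 ▸ h2 ▸ w

def val {S : Type*} [Semigroup S] [Star S] (θ : ℕ → S) : ∀ {a b : Vx}, Wlk a b → S
  | _, _, .single t => t.sval θ
  | _, _, .snoc w t _ => w.val θ * t.sval θ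

def items : ∀ {a b : Vx}, Wlk a b → Set (ℕ ⊕ (Vx × Vx))
  | _, _, .single t => {t.item}
  | _, _, .snoc w t _ => insert t.item w.items

@[simp] lemma items_snoc {a b : Vx} (w : Wlk a b) (t : Stp) (h : b = t.src) :
    (w.snoc t h).items = insert t.item w.items := rfl

def Mem (u : Stp) : ∀ {a b : Vx}, Wlk a b → Prop
  | _, _, .single t => u = t
  | _, _, .snoc w t _ => Mem u w ∨ u = t

section Cst
variable {S : Type*} [Semigroup S] [Star S] (θ : ℕ → S)

@[simp] lemma val_cst {a b a' b' : Vx} (h1 : a = a') (h2 : b = b') (w : Wlk a b) :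
    (w.cst h1 h2).val θ = w.val θ := by subst h1; subst h2; rfl

@[simp] lemma items_cst {a b a' b' : Vx} (h1 : a = a') (h2 : b = b') (w : Wlk a b) :
    (w.cst h1 h2).items = w.items := by subst h1; subst h2; rfl

@[simp] lemma mem_cst (u : Stp) {a b a' b' : Vx} (h1 : a = a') (h2 : b = b') (w : Wlk a b) :
    (w.cst h1 h2).Mem u ↔ w.Mem u := by subst h1; subst h2; rfl

end Cst

def appAux : ∀ {b c : Vx}, Wlk b c → ∀ {a : Vx}, Wlk a b → Wlk a c
  | _, _, .single t, _, w => .snoc w t rfl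
  | _, _, .snoc w₂ t h, _, w => .snoc (appAux w₂ w) t h

def append {a b c : Vx} (w₁ : Wlk a b) (w₂ : Wlk b c) : Wlk a c := appAux w₂ w₁

lemma val_append {S : Type*} [Semigroup S] [Star S] (θ : ℕ → S) :
    ∀ {a b c : Vx} (w₁ : Wlk a b) (w₂ : Wlk b c),
    (w₁.append w₂).val θ = w₁.val θ * w₂.val θ := by
  intro a b c w₁ w₂
  induction w₂ with
  | single t => rfl
  | snoc w₂ t h ih =>
      show val θ ((w₁.append w₂).snoc t h) = _
      simp only [val, ih w₁, mul_assoc]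

lemma items_append : ∀ {a b c : Vx} (w₁ : Wlk a b) (w₂ : Wlk b c),
    (w₁.append w₂).items = w₁.items ∪ w₂.items := by
  intro a b c w₁ w₂
  induction w₂ with
  | single t => simp [append, appAux, items, Set.union_comm]
  | snoc w₂ t h ih =>
      show ((w₁.append w₂).snoc t h).items = _
      simp only [items, ih w₁, Set.union_insert]

lemma mem_append (u : Stp) : ∀ {a b c : Vx} (w₁ : Wlk a b) (w₂ : Wlk b c),
    (w₁.append w₂).Mem u ↔ w₁.Mem u ∨ w₂.Mem u := by
  intro a b c w₁ w₂
  induction w₂ with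
  | single t => simp [append, appAux, Mem]
  | snoc w₂ t h ih =>
      show Mem u ((w₁.append w₂).snoc t h) ↔ _
      simp only [Mem, ih w₁, or_assoc]

def rev : ∀ {a b : Vx}, Wlk a b → Wlk b a
  | _, _, .single t => (single t.rev).cst (Stp.src_rev t) (Stp.dst_rev t)
  | _, _, .snoc (a := a) w t h =>
      ((single t.rev).cst (Stp.src_rev t) (Stp.dst_rev t)).append
        ((rev w).cst (by rw [h]) rfl)

lemma items_rev : ∀ {a b : Vx} (w : Wlk a b), w.rev.items = w.items := by
  intro a b w
  induction w with
  | single t => simp [rev, items]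
  | snoc w t h ih =>
      simp only [rev, items_append, items_cst, items, ih]
      simp [Set.union_comm]

end Wlk

section WalkVal

variable {S : Type*} [Semigroup S] [Star S] (θ : ℕ → S) (H : SigmaRef S)
include H

lemma absorbL : ∀ {a b : Vx} (w : Wlk a b), el θ a * w.val θ = w.val θ := by
  intro a b w
  induction w with
  | single t => exact step_absorbL θ H t
  | snoc w t h ih => simp only [Wlk.val, ← mul_assoc, ih]

lemma absorbR : ∀ {a b : Vx} (w : Wlk a b), w.val θ * el θ b = w.val θ := by
  intro a b w
  induction w with
  | single t => exact step_absorbR θ H t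
  | snoc w t h ih => simp only [Wlk.val, mul_assoc, step_absorbR θ H t]

lemma val_rev : ∀ {a b : Vx} (w : Wlk a b), w.rev.val θ = star (w.val θ) := by
  intro a b w
  induction w with
  | single t => simp only [Wlk.rev, Wlk.val_cst]; exact sval_rev θ H t
  | snoc w t h ih =>
      show Wlk.val θ (Wlk.append ((Wlk.single t.rev).cst (Stp.src_rev t) (Stp.dst_rev t))
        ((Wlk.rev w).cst (by rw [h]) rfl)) = _
      rw [Wlk.val_append, Wlk.val_cst, Wlk.val_cst, ih]
      show Stp.sval θ t.rev * _ = _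
      rw [sval_rev θ H t]
      refine (H.revmul (el θ t.src) _ _ (el_idem θ H _) (el_star θ H _) ?_ ?_).symm
      · rw [← h]; exact absorbR θ H w
      · exact step_absorbL θ H t

end WalkVal

section Split

variable {S : Type*} [Semigroup S] [Star S] (θ : ℕ → S)

lemma item_exists : ∀ {a b : Vx} (X : Wlk a b) (i : ℕ ⊕ (Vx × Vx)),
    i ∈ X.items → ∃ u, X.Mem u ∧ u.item = i := by
  intro a b X i hi
  induction X with
  | single t => exact ⟨t, rfl, by simpa [Wlk.items] using hi.symm⟩
  | snoc w t h ih =>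
      rcases hi with hi | hi
      · exact ⟨t, Or.inr rfl, by rw [hi]⟩
      · obtain ⟨u, hu, hiu⟩ := ih hi
        exact ⟨u, Or.inl hu, hiu⟩

lemma split : ∀ {a b : Vx} (X : Wlk a b) (u : Stp), X.Mem u →
    (∃ (Y : Wlk a u.src) (Z : Wlk u.dst b),
        X.val θ = Y.val θ * (u.sval θ * Z.val θ)) ∨
    (∃ Z : Wlk u.dst b, a = u.src ∧ X.val θ = u.sval θ * Z.val θ) ∨
    (∃ Y : Wlk a u.src, b = u.dst ∧ X.val θ = Y.val θ * u.sval θ) ∨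
    (a = u.src ∧ b = u.dst ∧ X.val θ = u.sval θ) := by
  intro a b X u hm
  induction X with
  | single t =>
      cases hm
      exact Or.inr (Or.inr (Or.inr ⟨rfl, rfl, rfl⟩))
  | snoc w t h ih =>
      rcases hm with hm | hm
      · rcases ih hm with ⟨Y, Z, hv⟩ | ⟨Z, ha, hv⟩ | ⟨Y, hb, hv⟩ | ⟨ha, hb, hv⟩
        · refine Or.inl ⟨Y, Z.snoc t (by rw [← h]), ?_⟩
          simp only [Wlk.val, hv, mul_assoc]
        · refine Or.inr (Or.inl ⟨Z.snoc t (by rw [← h]), ha, ?_⟩)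
          simp only [Wlk.val, hv, mul_assoc]
        · refine Or.inl ⟨Y, (Wlk.single t).cst (h.symm.trans hb) rfl, ?_⟩
          simp only [Wlk.val, Wlk.val_cst, hv, mul_assoc]
        · refine Or.inr (Or.inl ⟨(Wlk.single t).cst (h.symm.trans hb) rfl, ha, ?_⟩)
          simp only [Wlk.val, Wlk.val_cst, hv, mul_assoc]
      · cases hm
        exact Or.inr (Or.inr (Or.inl ⟨w.cst rfl h, rfl, by
          simp only [Wlk.val, Wlk.val_cst]⟩))

variable (H : SigmaRef S)
include H

lemma step_dichotomy (u t : Stp) (hi : u.item = t.item) :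
    (u.sval θ = t.sval θ ∧ u.src = t.src ∧ u.dst = t.dst) ∨
    (u.sval θ = star (t.sval θ) ∧ u.src = t.dst ∧ u.dst = t.src) := by
  cases u with
  | seg x d =>
      cases t with
      | seg x' d' =>
          obtain rfl : x = x' := by simpa [Stp.item] using hi
          cases d <;> cases d'
          · exact Or.inl ⟨rfl, rfl, rfl⟩
          · exact Or.inr ⟨rfl, rfl, rfl⟩
          · exact Or.inr ⟨(H.inv (θ x)).symm, rfl, rfl⟩
          · exact Or.inl ⟨rfl, rfl, rfl⟩
      | edg a b d' => simp [Stp.item] at hi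
  | edg a b d =>
      cases t with
      | seg x' d' => simp [Stp.item] at hi
      | edg a' b' d' =>
          obtain ⟨rfl, rfl⟩ : a = a' ∧ b = b' := by
            simpa [Stp.item, Prod.ext_iff] using hi
          cases d <;> cases d'
          · exact Or.inl ⟨rfl, rfl, rfl⟩
          · exact Or.inr ⟨rfl, rfl, rfl⟩
          · exact Or.inr ⟨(H.inv _).symm, rfl, rfl⟩
          · exact Or.inl ⟨rfl, rfl, rfl⟩

end Split

section Insert

variable {S : Type*} [Semigroup S] [Star S] (θ : ℕ → S) (H : SigmaRef S)
include H

omit H in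
lemma e1 (H : SigmaRef S) (g z : S) : g * (star g * (g * z)) = g * z := by
  rw [← mul_assoc, ← mul_assoc, H.reg]

omit H in
lemma e2 (H : SigmaRef S) (g z : S) : star g * (g * (star g * z)) = star g * z := by
  rw [← mul_assoc, ← mul_assoc, H.reg']

omit H in
lemma e3 (H : SigmaRef S) (g : S) : g * (star g * g) = g := by
  rw [← mul_assoc, H.reg]

omit H in
lemma e4 (H : SigmaRef S) (g : S) : star g * (g * star g) = star g := by
  rw [← mul_assoc, H.reg']

lemma insert_loop {s : Vx} (X : Wlk s s) (t : Stp) (hi : t.item ∈ X.items) :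
    (∃ (Y : Wlk s t.src) (Z : Wlk t.src s),
        X.val θ = Y.val θ * Z.val θ ∧
        X.val θ = Y.val θ * ((t.sval θ * star (t.sval θ)) * Z.val θ)) ∨
    (s = t.src ∧ X.val θ = (t.sval θ * star (t.sval θ)) * X.val θ) ∨
    (s = t.src ∧ X.val θ = X.val θ * (t.sval θ * star (t.sval θ))) := by
  obtain ⟨u, hm, hitem⟩ := item_exists X t.item hi
  set g := t.sval θ with hg
  rcases step_dichotomy θ H u t hitem with ⟨h1, h2, h3⟩ | ⟨h1, h2, h3⟩
  · rcases split θ X u hm with ⟨Y, Z, hv⟩ | ⟨Z, ha, hv⟩ | ⟨Y, hb, hv⟩ | ⟨ha, hb, hv⟩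
    · refine Or.inl ⟨Y.cst rfl h2, ((Wlk.single u).append Z).cst h2 rfl, ?_, ?_⟩
      · simpa only [Wlk.val_cst, Wlk.val_append, Wlk.val] using hv
      · simp only [Wlk.val_cst, Wlk.val_append]
        show Wlk.val θ X = Wlk.val θ Y * (g * star g * (Stp.sval θ u * Wlk.val θ Z))
        rw [h1, mul_assoc, e1 H]
        rw [hv, h1]
    · refine Or.inr (Or.inl ⟨ha.trans h2, ?_⟩)
      rw [hv, h1, mul_assoc, e1 H]
    · refine Or.inl ⟨Y.cst rfl h2, (Wlk.single u).cst h2 hb.symm, ?_, ?_⟩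
      · simpa only [Wlk.val_cst, Wlk.val] using hv
      · simp only [Wlk.val_cst]
        show Wlk.val θ X = Wlk.val θ Y * (g * star g * Stp.sval θ u)
        rw [h1, mul_assoc, e3 H]
        rw [hv, h1]
    · refine Or.inr (Or.inl ⟨ha.trans h2, ?_⟩)
      rw [hv, h1, mul_assoc, e3 H]
  · rcases split θ X u hm with ⟨Y, Z, hv⟩ | ⟨Z, ha, hv⟩ | ⟨Y, hb, hv⟩ | ⟨ha, hb, hv⟩
    · refine Or.inl ⟨(Y.snoc u rfl).cst rfl h3, Z.cst h3 rfl, ?_, ?_⟩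
      · simp only [Wlk.val_cst, Wlk.val]
        rw [hv, mul_assoc]
      · simp only [Wlk.val_cst, Wlk.val]
        show Wlk.val θ X = Wlk.val θ Y * Stp.sval θ u * (g * star g * Wlk.val θ Z)
        rw [h1, mul_assoc, mul_assoc, e2 H]
        rw [hv, h1]
    · refine Or.inl ⟨(Wlk.single u).cst ha.symm h3, Z.cst h3 rfl, ?_, ?_⟩
      · simpa only [Wlk.val_cst, Wlk.val] using hv
      · simp only [Wlk.val_cst]
        show Wlk.val θ X = Stp.sval θ u * (g * star g * Wlk.val θ Z)
        rw [h1, mul_assoc, e2 H]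
        rw [hv, h1]
    · refine Or.inr (Or.inr ⟨hb.trans h3, ?_⟩)
      rw [hv, h1, mul_assoc, e4 H]
    · refine Or.inr (Or.inr ⟨hb.trans h3, ?_⟩)
      rw [hv, h1, e4 H]

end Insert

section Absorb

variable {S : Type*} [Semigroup S] [Star S] (θ : ℕ → S) (H : SigmaRef S)
include H

omit H in
lemma mul_swap (H : SigmaRef S) {a b : S} (hab : a * b = b * a) (c : S) :
    a * (b * c) = b * (a * c) := by
  rw [← mul_assoc, hab, mul_assoc]

lemma lam_left (t : Stp) : el θ t.src * (t.sval θ * star (t.sval θ)) =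
    t.sval θ * star (t.sval θ) := by
  rw [← mul_assoc, step_absorbL θ H t]

lemma lam_right (t : Stp) : (t.sval θ * star (t.sval θ)) * el θ t.src =
    t.sval θ * star (t.sval θ) := by
  rw [mul_assoc, H.starv (el θ t.src) (t.sval θ) (el_idem θ H _) (el_star θ H _)
    (step_absorbL θ H t)]

lemma lam_idem (t : Stp) : (t.sval θ * star (t.sval θ)) * (t.sval θ * star (t.sval θ)) =
    t.sval θ * star (t.sval θ) := by
  rw [mul_assoc, e1 H]

lemma loop_idem {s : Vx} (X : Wlk s s) : X.val θ * X.val θ = X.val θ :=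
  H.bordered_idem (el θ s) (X.val θ) (el_idem θ H s) (absorbL θ H X) (absorbR θ H X)

lemma loop_absorb_lam {s : Vx} (X : Wlk s s) (t : Stp) (ht : t.src = s)
    (hi : t.item ∈ X.items) :
    X.val θ * (t.sval θ * star (t.sval θ)) = X.val θ := by
  subst ht
  rcases insert_loop θ H X t hi with ⟨Y, Z, hv1, hv2⟩ | ⟨_, h2⟩ | ⟨_, h2⟩
  · have hcomm : Z.val θ * (t.sval θ * star (t.sval θ)) =
        (t.sval θ * star (t.sval θ)) * Z.val θ :=
      H.bordered_comm (el θ t.src) _ _ (el_idem θ H _) (absorbL θ H Z) (absorbR θ H Z)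
        (lam_left θ H t) (lam_right θ H t)
    calc X.val θ * (t.sval θ * star (t.sval θ))
        = Y.val θ * (Z.val θ * (t.sval θ * star (t.sval θ))) := by rw [hv1, mul_assoc]
      _ = Y.val θ * ((t.sval θ * star (t.sval θ)) * Z.val θ) := by rw [hcomm]
      _ = X.val θ := hv2.symm
  · have hcomm : X.val θ * (t.sval θ * star (t.sval θ)) =
        (t.sval θ * star (t.sval θ)) * X.val θ :=
      H.bordered_comm (el θ t.src) _ _ (el_idem θ H _) (absorbL θ H X) (absorbR θ H X)
        (lam_left θ H t) (lam_right θ H t)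
    rw [hcomm]; exact h2.symm
  · exact h2.symm

lemma abl : ∀ {c s : Vx} (Q : Wlk s c) (X : Wlk s s), Q.items ⊆ X.items →
    X.val θ * (Q.val θ * star (Q.val θ)) = X.val θ := by
  intro c s Q
  induction Q with
  | single t =>
      intro X hsub
      have hi : t.item ∈ X.items := hsub (by simp [Wlk.items])
      exact loop_absorb_lam θ H X t rfl hi
  | @snoc s b P t h ih =>
      intro X hsub
      have hi : t.item ∈ X.items := hsub (by simp [Wlk.items])
      have hPsub : P.items ⊆ X.items := fun i hiP => hsub (by simp [Wlk.items, hiP])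
      have hPe : P.val θ * el θ t.src = P.val θ := by
        rw [← h]; exact absorbR θ H P
      have hrev : star (P.val θ * t.sval θ) = star (t.sval θ) * star (P.val θ) :=
        H.revmul (el θ t.src) _ _ (el_idem θ H _) (el_star θ H _) hPe (step_absorbL θ H t)
      show X.val θ * ((P.val θ * t.sval θ) * star (P.val θ * t.sval θ)) = X.val θ
      rw [hrev]
      rcases insert_loop θ H X t hi with ⟨Y, Z, hv1, hv2⟩ | ⟨hts, _⟩ | ⟨hts, _⟩
      · -- general case: junction at t.src
        have hZP_left : el θ t.src * (Z.val θ * P.val θ) = Z.val θ * P.val θ := by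
          rw [← mul_assoc, absorbL θ H Z]
        have hZP_right : (Z.val θ * P.val θ) * el θ t.src = Z.val θ * P.val θ := by
          rw [mul_assoc, hPe]
        have hcomm : (Z.val θ * P.val θ) * (t.sval θ * star (t.sval θ)) =
            (t.sval θ * star (t.sval θ)) * (Z.val θ * P.val θ) :=
          H.bordered_comm (el θ t.src) _ _ (el_idem θ H _) hZP_left hZP_right
            (lam_left θ H t) (lam_right θ H t)
        have c1 : Z.val θ * (P.val θ * (t.sval θ * (star (t.sval θ) * star (P.val θ)))) =
            t.sval θ * (star (t.sval θ) * (Z.val θ * (P.val θ * star (P.val θ)))) := by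
          calc Z.val θ * (P.val θ * (t.sval θ * (star (t.sval θ) * star (P.val θ))))
              = (Z.val θ * P.val θ) * ((t.sval θ * star (t.sval θ)) * star (P.val θ)) := by
                simp only [mul_assoc]
            _ = (t.sval θ * star (t.sval θ)) * ((Z.val θ * P.val θ) * star (P.val θ)) :=
                mul_swap H hcomm _
            _ = t.sval θ * (star (t.sval θ) * (Z.val θ * (P.val θ * star (P.val θ)))) := by
                simp only [mul_assoc]
        have hv2' : X.val θ = Y.val θ * (t.sval θ * (star (t.sval θ) * Z.val θ)) := by
          rw [hv2]; simp only [mul_assoc]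
        calc X.val θ * ((P.val θ * t.sval θ) * (star (t.sval θ) * star (P.val θ)))
            = (X.val θ * X.val θ) * ((P.val θ * t.sval θ) * (star (t.sval θ) * star (P.val θ))) := by
              rw [loop_idem θ H X]
          _ = (Y.val θ * Z.val θ) * ((Y.val θ * (t.sval θ * (star (t.sval θ) * Z.val θ))) *
                ((P.val θ * t.sval θ) * (star (t.sval θ) * star (P.val θ)))) := by
              rw [← hv1, ← hv2', mul_assoc]
          _ = Y.val θ * (Z.val θ * (Y.val θ * (t.sval θ * (star (t.sval θ) *
                (Z.val θ * (P.val θ * (t.sval θ * (star (t.sval θ) * star (P.val θ))))))))) := by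
              simp only [mul_assoc]
          _ = Y.val θ * (Z.val θ * (Y.val θ * (t.sval θ * (star (t.sval θ) *
                (t.sval θ * (star (t.sval θ) * (Z.val θ * (P.val θ * star (P.val θ))))))))) := by
              rw [c1]
          _ = Y.val θ * (Z.val θ * (Y.val θ * (t.sval θ * (star (t.sval θ) *
                (Z.val θ * (P.val θ * star (P.val θ))))))) := by
              rw [e1 H (t.sval θ) (star (t.sval θ) * (Z.val θ * (P.val θ * star (P.val θ))))]
          _ = (Y.val θ * Z.val θ) * ((Y.val θ * (t.sval θ * (star (t.sval θ) * Z.val θ))) *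
                (P.val θ * star (P.val θ))) := by
              simp only [mul_assoc]
          _ = X.val θ * (X.val θ * (P.val θ * star (P.val θ))) := by
              rw [← hv1, ← hv2']
          _ = (X.val θ * X.val θ) * (P.val θ * star (P.val θ)) := by rw [mul_assoc]
          _ = X.val θ * (P.val θ * star (P.val θ)) := by rw [loop_idem θ H X]
          _ = X.val θ := ih X hPsub
      · -- degenerate: t.src = s
        subst hts
        have hPl : el θ t.src * P.val θ = P.val θ := absorbL θ H P
        have hPr : P.val θ * el θ t.src = P.val θ := hPe
        have hcomm : P.val θ * (t.sval θ * star (t.sval θ)) =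
            (t.sval θ * star (t.sval θ)) * P.val θ :=
          H.bordered_comm (el θ t.src) _ _ (el_idem θ H _) hPl hPr
            (lam_left θ H t) (lam_right θ H t)
        calc X.val θ * ((P.val θ * t.sval θ) * (star (t.sval θ) * star (P.val θ)))
            = X.val θ * (P.val θ * ((t.sval θ * star (t.sval θ)) * star (P.val θ))) := by
              simp only [mul_assoc]
          _ = X.val θ * ((t.sval θ * star (t.sval θ)) * (P.val θ * star (P.val θ))) := by
              rw [mul_swap H hcomm]
          _ = (X.val θ * (t.sval θ * star (t.sval θ))) * (P.val θ * star (P.val θ)) := by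
              simp only [mul_assoc]
          _ = X.val θ * (P.val θ * star (P.val θ)) := by
              rw [loop_absorb_lam θ H X t rfl hi]
          _ = X.val θ := ih X hPsub
      · -- same degenerate case
        subst hts
        have hPl : el θ t.src * P.val θ = P.val θ := absorbL θ H P
        have hPr : P.val θ * el θ t.src = P.val θ := hPe
        have hcomm : P.val θ * (t.sval θ * star (t.sval θ)) =
            (t.sval θ * star (t.sval θ)) * P.val θ :=
          H.bordered_comm (el θ t.src) _ _ (el_idem θ H _) hPl hPr
            (lam_left θ H t) (lam_right θ H t)
        calc X.val θ * ((P.val θ * t.sval θ) * (star (t.sval θ) * star (P.val θ)))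
            = X.val θ * (P.val θ * ((t.sval θ * star (t.sval θ)) * star (P.val θ))) := by
              simp only [mul_assoc]
          _ = X.val θ * ((t.sval θ * star (t.sval θ)) * (P.val θ * star (P.val θ))) := by
              rw [mul_swap H hcomm]
          _ = (X.val θ * (t.sval θ * star (t.sval θ))) * (P.val θ * star (P.val θ)) := by
              simp only [mul_assoc]
          _ = X.val θ * (P.val θ * star (P.val θ)) := by
              rw [loop_absorb_lam θ H X t rfl hi]
          _ = X.val θ := ih X hPsub

end Absorb

section MainEq

variable {S : Type*} [Semigroup S] [Star S] (θ : ℕ → S) (H : SigmaRef S)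
include H

lemma loop_pstar {s : Vx} (P : Wlk s s) : P.val θ * star (P.val θ) = P.val θ := by
  have hl : el θ s * star (P.val θ) = star (P.val θ) :=
    H.vstar (el θ s) (P.val θ) (el_idem θ H s) (el_star θ H s) (absorbR θ H P)
  have hr : star (P.val θ) * el θ s = star (P.val θ) :=
    H.starv (el θ s) (P.val θ) (el_idem θ H s) (el_star θ H s) (absorbL θ H P)
  have hcomm : star (P.val θ) * P.val θ = P.val θ * star (P.val θ) :=
    H.bordered_comm (el θ s) _ _ (el_idem θ H s) hl hr (absorbL θ H P) (absorbR θ H P)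
  conv_rhs => rw [← H.reg (P.val θ)]
  rw [mul_assoc, hcomm, ← mul_assoc, loop_idem θ H P]

lemma loops_eq {s : Vx} (X Y : Wlk s s) (h : X.items = Y.items) :
    X.val θ = Y.val θ := by
  have hA := abl θ H Y X (by rw [h])
  rw [loop_pstar θ H Y] at hA
  have hB := abl θ H X Y (by rw [h])
  rw [loop_pstar θ H X] at hB
  have hcomm : X.val θ * Y.val θ = Y.val θ * X.val θ :=
    H.bordered_comm (el θ s) _ _ (el_idem θ H s) (absorbL θ H X) (absorbR θ H X)
      (absorbL θ H Y) (absorbR θ H Y)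
  rw [← hA, hcomm, hB]

lemma walks_eq {s e : Vx} (W1 W2 : Wlk s e) (h : W1.items = W2.items) :
    W1.val θ = W2.val θ := by
  have hFG : (W1.rev.append W1).val θ = (W1.rev.append W2).val θ := by
    refine loops_eq θ H _ _ ?_
    rw [Wlk.items_append, Wlk.items_append, Wlk.items_rev, h]
  have hAD : (W1.append W1.rev).val θ = (W2.append W2.rev).val θ := by
    refine loops_eq θ H _ _ ?_
    rw [Wlk.items_append, Wlk.items_append, Wlk.items_rev, Wlk.items_rev, h]
  have h1 : W1.val θ = W1.val θ * ((W1.rev.append W1).val θ) := by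
    rw [Wlk.val_append, val_rev θ H, ← mul_assoc, H.reg]
  have h2 : W1.val θ * ((W1.rev.append W2).val θ) = W2.val θ := by
    rw [Wlk.val_append, val_rev θ H, ← mul_assoc]
    have : W1.val θ * star (W1.val θ) = (W1.append W1.rev).val θ := by
      rw [Wlk.val_append, val_rev θ H]
    rw [this, hAD, Wlk.val_append, val_rev θ H, mul_assoc, ← mul_assoc, H.reg]
  rw [h1, hFG, h2]

end MainEq


section ToWalk

/-- The diagonal of `Vx`. -/
def Dg : Set (Vx × Vx) := {p | p.1 = p.2}

noncomputable def toWalk : (u : UWord ℕ) → Wlk (u.ends.1) (u.ends.2)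
  | .letter x => Wlk.single (Stp.seg x true)
  | .mul u v =>
      if h : u.ends.2 = v.ends.1 then
        (toWalk u).append ((toWalk v).cst h.symm rfl)
      else
        ((toWalk u).snoc (Stp.edg u.ends.2 v.ends.1 true) rfl).append (toWalk v)
  | .star u => (toWalk u).rev

variable {S : Type*} [Semigroup S] [Star S] (θ : ℕ → S) (H : SigmaRef S)
include H

lemma val_toWalk : ∀ u : UWord ℕ, (toWalk u).val θ = u.eval θ := by
  intro u
  induction u with
  | letter x => rfl
  | mul u v ihu ihv =>
      show Wlk.val θ (toWalk (u.mul v)) = u.eval θ * v.eval θ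
      show Wlk.val θ (if h : u.ends.2 = v.ends.1 then (toWalk u).append ((toWalk v).cst h.symm rfl) else ((toWalk u).snoc (Stp.edg u.ends.2 v.ends.1 true) ((Stp.src.eq_2 u.ends.2 v.ends.1 true).trans (if_pos rfl)).symm).append ((toWalk v).cst ((Stp.dst.eq_2 u.ends.2 v.ends.1 true).trans (if_pos rfl)).symm rfl)) = _
      split
      · rw [Wlk.val_append, Wlk.val_cst, ihu, ihv]
      · refine (Wlk.val_append θ _ _).trans ?_; rw [Wlk.val_cst, ihv]
        show (Wlk.val θ (toWalk u) * Stp.sval θ (Stp.edg u.ends.2 v.ends.1 true)) *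
          v.eval θ = _
        show (Wlk.val θ (toWalk u) * (el θ u.ends.2 * el θ v.ends.1)) * v.eval θ = _
        rw [← mul_assoc, absorbR θ H (toWalk u), mul_assoc, ← ihv,
          absorbL θ H (toWalk v), ihu, ihv]
  | star u ihu =>
      show Wlk.val θ (toWalk u).rev = star (u.eval θ)
      rw [val_rev θ H, ihu]

omit H in
lemma items_toWalk : ∀ u : UWord ℕ,
    (toWalk u).items = Sum.inl '' u.letters ∪ Sum.inr '' (u.edges \ Dg) := by
  intro u
  induction u with
  | letter x =>
      show ({(Stp.seg x true).item} : Set _) = _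
      simp [Stp.item, UWord.letters, UWord.edges]
  | mul u v ihu ihv =>
      show Wlk.items (toWalk (u.mul v)) = _
      show Wlk.items (if h : u.ends.2 = v.ends.1 then (toWalk u).append ((toWalk v).cst h.symm rfl) else ((toWalk u).snoc (Stp.edg u.ends.2 v.ends.1 true) ((Stp.src.eq_2 u.ends.2 v.ends.1 true).trans (if_pos rfl)).symm).append ((toWalk v).cst ((Stp.dst.eq_2 u.ends.2 v.ends.1 true).trans (if_pos rfl)).symm rfl)) = _
      have hed : (u.mul v).edges = u.edges ∪ v.edges ∪ {(u.ends.2, v.ends.1)} := rfl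
      have hlt : (u.mul v).letters = u.letters ∪ v.letters := rfl
      split
      · next h =>
        have hc : ({(u.ends.2, v.ends.1)} : Set (Vx × Vx)) \ Dg = ∅ := by
          apply Set.diff_eq_empty.mpr
          intro p hp
          rw [Set.mem_singleton_iff] at hp
          rw [hp]
          exact h
        rw [Wlk.items_append, Wlk.items_cst, ihu, ihv, hed, hlt,
          Set.union_diff_distrib, Set.union_diff_distrib, hc, Set.union_empty,
          Set.image_union, Set.image_union]
        ext i
        simp only [Set.mem_union]
        tauto
      · next h =>
        have hc : ({(u.ends.2, v.ends.1)} : Set (Vx × Vx)) \ Dg =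
            {(u.ends.2, v.ends.1)} := by
          ext p
          constructor
          · rintro ⟨hp, _⟩; exact hp
          · intro hp
            rw [Set.mem_singleton_iff] at hp
            exact ⟨hp, by rw [hp]; exact h⟩
        refine (Wlk.items_append _ _).trans ?_; rw [Wlk.items_snoc, Wlk.items_cst, ihu, ihv, hed, hlt,
          Set.union_diff_distrib, Set.union_diff_distrib, hc,
          Set.image_union, Set.image_union, Set.image_union, Set.image_singleton,
          Set.insert_eq]
        show {Sum.inr (u.ends.2, v.ends.1)} ∪ _ ∪ _ = _
        ext i
        simp only [Set.mem_union, Set.mem_singleton_iff]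
        tauto
  | star u ihu =>
      show Wlk.items (toWalk u).rev = _
      rw [Wlk.items_rev, ihu]
      rfl

lemma eval_eq_of_data {u v : UWord ℕ}
    (hl : u.letters = v.letters) (he : u.ends = v.ends)
    (hedg : u.edges ∪ Dg = v.edges ∪ Dg) (θ : ℕ → S) :
    u.eval θ = v.eval θ := by
  have hdiff : u.edges \ Dg = v.edges \ Dg := by
    ext p
    constructor <;> intro ⟨hp1, hp2⟩
    · have : p ∈ v.edges ∪ Dg := hedg ▸ Or.inl hp1
      exact ⟨this.resolve_right hp2, hp2⟩
    · have : p ∈ u.edges ∪ Dg := hedg.symm ▸ Or.inl hp1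
      exact ⟨this.resolve_right hp2, hp2⟩
  have h1 : u.ends.1 = v.ends.1 := by rw [he]
  have h2 : u.ends.2 = v.ends.2 := by rw [he]
  have := walks_eq θ H (toWalk u) ((toWalk v).cst h1.symm h2.symm) (by
    rw [Wlk.items_cst, items_toWalk, items_toWalk, hl, hdiff])
  rw [val_toWalk θ H u] at this
  rw [Wlk.val_cst, val_toWalk θ H v] at this
  exact this

end ToWalk


section Semantic

variable {X : Type*} {V : Type*} (r : V → V → Prop)

@[simp] lemma adjMul_none_left (z : Option (V × V)) : adjMul r none z = none := by
  cases z with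
  | none => rfl
  | some p => rcases p with ⟨a, b⟩; rfl

@[simp] lemma adjMul_none_right (z : Option (V × V)) : adjMul r z none = none := by
  cases z with
  | none => rfl
  | some p => rcases p with ⟨a, b⟩; rfl

lemma adjMul_some_some (p q : V × V) :
    adjMul r (some p) (some q) =
      @ite _ (r p.2 q.1) (Classical.propDecidable _) (some (p.1, q.2)) none := by
  rcases p with ⟨a, b⟩; rcases q with ⟨c, d⟩; rfl

lemma evalA_congr (θ θ' : X → Option (V × V)) : ∀ u : UWord X,
    (∀ x ∈ u.letters, θ x = θ' x) → u.evalA r θ = u.evalA r θ' := by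
  intro u h
  induction u with
  | letter x => exact h x rfl
  | mul u v ihu ihv =>
      show adjMul r (u.evalA r θ) (v.evalA r θ) = adjMul r (u.evalA r θ') (v.evalA r θ')
      rw [ihu (fun x hx => h x (Or.inl hx)), ihv (fun x hx => h x (Or.inr hx))]
  | star u ihu =>
      show adjStar (u.evalA r θ) = adjStar (u.evalA r θ')
      rw [ihu (fun x hx => h x hx)]

lemma evalA_none (θ : X → Option (V × V)) : ∀ u : UWord X, ∀ x ∈ u.letters,
    θ x = none → u.evalA r θ = none := by
  intro u x hx h
  induction u with
  | letter y =>
      rcases hx with rfl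
      exact h
  | mul u v ihu ihv =>
      show adjMul r (u.evalA r θ) (v.evalA r θ) = none
      rcases hx with hx | hx
      · rw [ihu hx]; simp [adjMul_none_left]
      · rw [ihv hx]; simp [adjMul_none_right]
  | star u ihu =>
      show adjStar (u.evalA r θ) = none
      rw [ihu hx]; rfl

lemma letters_nonempty : ∀ u : UWord X, u.letters.Nonempty := by
  intro u
  induction u with
  | letter x => exact ⟨x, rfl⟩
  | mul u v ihu ihv => exact ⟨ihu.choose, Or.inl ihu.choose_spec⟩
  | star u ihu => exact ihu

lemma evalA_some (θ₀ : X → V × V) : ∀ u : UWord X,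
    u.evalA r (fun x => some (θ₀ x)) =
      @ite _ (∀ e ∈ u.edges, r (coordOf θ₀ e.1) (coordOf θ₀ e.2))
        (Classical.propDecidable _)
        (some (coordOf θ₀ u.ends.1, coordOf θ₀ u.ends.2)) none := by
  intro u
  induction u with
  | letter x =>
      rw [if_pos (by intro e he; exact absurd he (Set.notMem_empty e))]
      rfl
  | mul u v ihu ihv =>
      show adjMul r (u.evalA r _) (v.evalA r _) = _
      rw [ihu, ihv]
      by_cases h1 : ∀ e ∈ u.edges, r (coordOf θ₀ e.1) (coordOf θ₀ e.2)
      · rw [if_pos h1]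
        by_cases h2 : ∀ e ∈ v.edges, r (coordOf θ₀ e.1) (coordOf θ₀ e.2)
        · rw [if_pos h2, adjMul_some_some]
          by_cases h3 : r (coordOf θ₀ u.ends.2) (coordOf θ₀ v.ends.1)
          · rw [if_pos h3, if_pos]
            · rfl
            · intro e he
              rcases he with (he | he) | he
              · exact h1 e he
              · exact h2 e he
              · rcases he with rfl; exact h3
          · rw [if_neg h3, if_neg]
            intro hall
            exact h3 (hall (u.ends.2, v.ends.1) (Or.inr rfl))
        · rw [if_neg h2, adjMul_none_right, if_neg]
          intro hall
          exact h2 (fun e he => hall e (Or.inl (Or.inr he)))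
      · rw [if_neg h1, adjMul_none_left, if_neg]
        intro hall
        exact h1 (fun e he => hall e (Or.inl (Or.inl he)))
  | star u ihu =>
      show adjStar (u.evalA r _) = _
      rw [ihu, show u.star.edges = u.edges from rfl,
        show u.star.ends = (u.ends.2, u.ends.1) from rfl]
      by_cases h : ∀ e ∈ u.edges, r (coordOf θ₀ e.1) (coordOf θ₀ e.2)
      · rw [if_pos h, if_pos h]; rfl
      · rw [if_neg h, if_neg h]; rfl

end Semantic

section Characterization

lemma valid_of_data {u v : UWord ℕ}
    (hl : u.letters = v.letters) (he : u.ends = v.ends)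
    (hedg : u.edges ∪ Dg = v.edges ∪ Dg) :
    ∀ (V : Type) (rel : V → V → Prop), (∀ w : V, rel w w) →
      ∀ θ : ℕ → Option (V × V), u.evalA rel θ = v.evalA rel θ := by
  intro V rel hrefl θ
  by_cases hn : ∃ x ∈ u.letters, θ x = none
  · obtain ⟨x, hx, hnone⟩ := hn
    rw [evalA_none rel θ u x hx hnone, evalA_none rel θ v x (hl ▸ hx) hnone]
  · push_neg at hn
    have hsome : ∀ x ∈ u.letters, ∃ p, θ x = some p := by
      intro x hx
      rcases hθ : θ x with _ | p
      · exact absurd hθ (hn x hx)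
      · exact ⟨p, rfl⟩
    obtain ⟨x₀, hx₀⟩ := letters_nonempty u
    obtain ⟨p₀, _⟩ := hsome x₀ hx₀
    have hV : Nonempty (V × V) := ⟨p₀⟩
    set θ₀ : ℕ → V × V := fun x => (θ x).getD (Classical.arbitrary _) with hθ₀
    have hagree : ∀ x ∈ u.letters, θ x = some (θ₀ x) := by
      intro x hx
      obtain ⟨p, hp⟩ := hsome x hx
      rw [hθ₀]; simp [hp]
    have hu : u.evalA rel θ = u.evalA rel (fun x => some (θ₀ x)) :=
      evalA_congr rel θ _ u hagree
    have hv : v.evalA rel θ = v.evalA rel (fun x => some (θ₀ x)) :=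
      evalA_congr rel θ _ v (fun x hx => hagree x (hl ▸ hx))
    rw [hu, hv, evalA_some, evalA_some]
    have hcond : (∀ e ∈ u.edges, rel (coordOf θ₀ e.1) (coordOf θ₀ e.2)) ↔
        (∀ e ∈ v.edges, rel (coordOf θ₀ e.1) (coordOf θ₀ e.2)) := by
      constructor
      · intro hc e he
        have : e ∈ u.edges ∪ Dg := hedg.symm ▸ Or.inl he
        rcases this with h' | h'
        · exact hc e h'
        · rw [show e.1 = e.2 from h']; exact hrefl _
      · intro hc e he
        have : e ∈ v.edges ∪ Dg := hedg ▸ Or.inl he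
        rcases this with h' | h'
        · exact hc e h'
        · rw [show e.1 = e.2 from h']; exact hrefl _
    by_cases hc : ∀ e ∈ u.edges, rel (coordOf θ₀ e.1) (coordOf θ₀ e.2)
    · rw [if_pos hc, if_pos (hcond.mp hc), he]
    · rw [if_neg hc, if_neg (fun h => hc (hcond.mpr h))]

lemma data_of_valid {u v : UWord ℕ}
    (hval : ∀ (V : Type) (rel : V → V → Prop), (∀ w : V, rel w w) →
      ∀ θ : ℕ → Option (V × V), u.evalA rel θ = v.evalA rel θ) :
    u.letters = v.letters ∧ u.ends = v.ends ∧ u.edges ∪ Dg = v.edges ∪ Dg := by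
  classical
  have key : ∀ w₁ w₂ : UWord ℕ,
      (∀ (V : Type) (rel : V → V → Prop), (∀ w : V, rel w w) →
        ∀ θ : ℕ → Option (V × V), w₁.evalA rel θ = w₂.evalA rel θ) →
      w₂.letters ⊆ w₁.letters ∧ w₂.ends = w₁.ends ∧ w₂.edges ⊆ w₁.edges ∪ Dg := by
    intro w₁ w₂ hv
    set rel : UWord.Vtx ℕ → UWord.Vtx ℕ → Prop :=
      fun a b => (a, b) ∈ w₁.edges ∨ a = b with hrel
    have hrefl : ∀ a, rel a a := fun a => Or.inr rfl
    set θ : ℕ → Option (UWord.Vtx ℕ × UWord.Vtx ℕ) :=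
      fun x => if x ∈ w₁.letters then some ((x, false), (x, true)) else none with hθ
    set θ₀ : ℕ → UWord.Vtx ℕ × UWord.Vtx ℕ := fun x => ((x, false), (x, true)) with hθ₀
    have hcoord : ∀ a : UWord.Vtx ℕ, coordOf θ₀ a = a := by
      rintro ⟨x, _ | _⟩ <;> rfl
    have hw1 : w₁.evalA rel θ = some (w₁.ends.1, w₁.ends.2) := by
      rw [evalA_congr rel θ (fun x => some (θ₀ x)) w₁
        (fun x hx => by rw [hθ]; simp [hx, hθ₀]), evalA_some, if_pos]
      · rw [hcoord, hcoord]
      · intro e he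
        rw [hcoord, hcoord]
        exact Or.inl (by rcases e with ⟨e1, e2⟩; exact he)
    have hw2 : w₂.evalA rel θ = some (w₁.ends.1, w₁.ends.2) := by
      rw [← hv _ rel hrefl θ]; exact hw1
    have hlsub : w₂.letters ⊆ w₁.letters := by
      intro x hx
      by_contra hxn
      have : w₂.evalA rel θ = none :=
        evalA_none rel θ w₂ x hx (by rw [hθ]; simp [hxn])
      rw [this] at hw2; cases hw2
    have hw2' : w₂.evalA rel (fun x => some (θ₀ x)) = some (w₁.ends.1, w₁.ends.2) := by
      rw [← evalA_congr rel θ (fun x => some (θ₀ x)) w₂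
        (fun x hx => by rw [hθ]; simp [hlsub hx, hθ₀])]
      exact hw2
    rw [evalA_some] at hw2'
    by_cases hc : ∀ e ∈ w₂.edges, rel (coordOf θ₀ e.1) (coordOf θ₀ e.2)
    · rw [if_pos hc] at hw2'
      have hends : w₂.ends = w₁.ends := by
        have := Option.some.inj hw2'
        rw [hcoord, hcoord] at this
        exact Prod.ext (congrArg Prod.fst this) (congrArg Prod.snd this)
      refine ⟨hlsub, hends, ?_⟩
      intro e he
      have := hc e he
      rw [hcoord, hcoord] at this
      rcases this with h' | h'
      · exact Or.inl (by rcases e with ⟨e1, e2⟩; exact h')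
      · exact Or.inr h'
    · rw [if_neg hc] at hw2'
      cases hw2'
  obtain ⟨h1, h2, h3⟩ := key u v hval
  obtain ⟨h1', h2', h3'⟩ := key v u (fun V rel hr θ => (hval V rel hr θ).symm)
  refine ⟨Set.Subset.antisymm h1' h1, h2', ?_⟩
  apply Set.Subset.antisymm
  · intro p hp
    rcases hp with hp | hp
    · exact h3' hp
    · exact Or.inr hp
  · intro p hp
    rcases hp with hp | hp
    · exact h3 hp
    · exact Or.inr hp

end Characterization


set_option maxHeartbeats 1000000 in
/-- Corollary: `Σ_ref` is an identity basis for the variety generated by the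
adjacency semigroups of all reflexive graphs: a unary semigroup satisfies all
the identities of `Σ_ref` if and only if it satisfies every unary semigroup
identity `u ≈ v` (over a countably infinite alphabet) that holds in the
adjacency semigroup of every reflexive graph. -/
theorem Sigma_ref_is_basis {S : Type*} [Semigroup S] [Star S] :
    ((∀ x : S, star (star x) = x) ∧
     (∀ x y z : S, x * star (y * z) = star (y * star (x * star z))) ∧
     (∀ x y z : S, star (x * y) * z = star (star (star x * z) * y)) ∧
     (∀ x : S, x * star x * x = x) ∧
     (∀ x : S, star (x * star x) = x * star x) ∧
     (∀ x : S, x * x * x = x * x) ∧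
     (∀ x y z : S, x * y * x * z * x = x * z * x * y * x * z * x) ∧
     (∀ x y z : S, x * z * x * y * x * z * x = x * z * x * y * x) ∧
     (∀ x y z : S, star x * y * x * z * x = star (x * z * x) * y * x * z * x) ∧
     (∀ x y z : S, x * y * x * z * star x = x * y * x * z * star (x * y * x))) ↔
    (∀ u v : UWord ℕ,
      (∀ (V : Type) (rel : V → V → Prop), (∀ w : V, rel w w) →
        ∀ θ : ℕ → Option (V × V), u.evalA rel θ = v.evalA rel θ) →
      ∀ θ : ℕ → S, u.eval θ = v.eval θ) := by
  constructor
  · rintro ⟨h1, h2, h3, h4, h5, h6, h7, h8, _, _⟩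
    intro u v hval θ
    have H : SigmaRef S := ⟨h1, h2, h3, h4, h5, h6, h7, h8⟩
    obtain ⟨hl, he, hedg⟩ := data_of_valid hval
    exact eval_eq_of_data H hl he hedg θ
  · intro h
    have L0 : UWord ℕ := .letter 0
    refine ⟨?_, ?_, ?_, ?_, ?_, ?_, ?_, ?_, ?_, ?_⟩
    · -- x'' = x
      intro x
      have := h (.star (.star (.letter 0))) (.letter 0)
        (valid_of_data rfl rfl rfl) (fun _ => x)
      simpa [UWord.eval] using this
    · -- x (yz)' = (y (x z')')'
      intro x y z
      have := h (.mul (.letter 0) (.star (.mul (.letter 1) (.letter 2))))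
        (.star (.mul (.letter 1) (.star (.mul (.letter 0) (.star (.letter 2))))))
        (valid_of_data (by ext t; simp [UWord.letters] <;> tauto) rfl
          (by ext p; simp [UWord.edges, UWord.ends, Dg] <;> tauto))
        (fun n => if n = 0 then x else if n = 1 then y else z)
      simpa [UWord.eval] using this
    · -- (xy)' z = ((x' z)' y)'
      intro x y z
      have := h (.mul (.star (.mul (.letter 0) (.letter 1))) (.letter 2))
        (.star (.mul (.star (.mul (.star (.letter 0)) (.letter 2))) (.letter 1)))
        (valid_of_data (by ext t; simp [UWord.letters] <;> tauto) rfl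
          (by ext p; simp [UWord.edges, UWord.ends, Dg] <;> tauto))
        (fun n => if n = 0 then x else if n = 1 then y else z)
      simpa [UWord.eval] using this
    · -- x x' x = x
      intro x
      have := h (.mul (.mul (.letter 0) (.star (.letter 0))) (.letter 0)) (.letter 0)
        (valid_of_data (by ext t; simp [UWord.letters]) rfl
          (by
            ext p
            simp only [UWord.edges, UWord.ends, Set.mem_union, Set.mem_singleton_iff,
              Set.mem_empty_iff_false, Dg, Set.mem_setOf_eq, false_or, or_false]
            constructor
            · rintro ((rfl | rfl) | hd)
              · rfl
              · rfl
              · exact hd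
            · exact fun hd => Or.inr hd))
        (fun _ => x)
      simpa [UWord.eval] using this
    · -- (x x')' = x x'
      intro x
      have := h (.star (.mul (.letter 0) (.star (.letter 0))))
        (.mul (.letter 0) (.star (.letter 0)))
        (valid_of_data rfl rfl rfl) (fun _ => x)
      simpa [UWord.eval] using this
    · -- x³ = x²
      intro x
      have := h (.mul (.mul (.letter 0) (.letter 0)) (.letter 0))
        (.mul (.letter 0) (.letter 0))
        (valid_of_data (by ext t; simp [UWord.letters]) rfl
          (by ext p; simp [UWord.edges, UWord.ends, Dg] <;> tauto))
        (fun _ => x)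
      simpa [UWord.eval] using this
    · -- xyxzx = xzxyxzx
      intro x y z
      have := h
        (.mul (.mul (.mul (.mul (.letter 0) (.letter 1)) (.letter 0)) (.letter 2)) (.letter 0))
        (.mul (.mul (.mul (.mul (.mul (.mul (.letter 0) (.letter 2)) (.letter 0)) (.letter 1))
          (.letter 0)) (.letter 2)) (.letter 0))
        (valid_of_data (by ext t; simp [UWord.letters] <;> tauto) rfl
          (by ext p; simp [UWord.edges, UWord.ends, Dg] <;> tauto))
        (fun n => if n = 0 then x else if n = 1 then y else z)
      simpa [UWord.eval] using this
    · -- xzxyxzx = xzxyx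
      intro x y z
      have := h
        (.mul (.mul (.mul (.mul (.mul (.mul (.letter 0) (.letter 2)) (.letter 0)) (.letter 1))
          (.letter 0)) (.letter 2)) (.letter 0))
        (.mul (.mul (.mul (.mul (.letter 0) (.letter 2)) (.letter 0)) (.letter 1)) (.letter 0))
        (valid_of_data (by ext t; simp [UWord.letters] <;> tauto) rfl
          (by ext p; simp [UWord.edges, UWord.ends, Dg] <;> tauto))
        (fun n => if n = 0 then x else if n = 1 then y else z)
      simpa [UWord.eval] using this
    · -- x' y x z x = (xzx)' y x z x
      intro x y z
      have := h
        (.mul (.mul (.mul (.mul (.star (.letter 0)) (.letter 1)) (.letter 0)) (.letter 2))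
          (.letter 0))
        (.mul (.mul (.mul (.mul (.star (.mul (.mul (.letter 0) (.letter 2)) (.letter 0)))
          (.letter 1)) (.letter 0)) (.letter 2)) (.letter 0))
        (valid_of_data (by ext t; simp [UWord.letters] <;> tauto) rfl
          (by ext p; simp [UWord.edges, UWord.ends, Dg] <;> tauto))
        (fun n => if n = 0 then x else if n = 1 then y else z)
      simpa [UWord.eval] using this
    · -- x y x z x' = x y x z (xyx)'
      intro x y z
      have := h
        (.mul (.mul (.mul (.mul (.letter 0) (.letter 1)) (.letter 0)) (.letter 2))
          (.star (.letter 0)))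
        (.mul (.mul (.mul (.mul (.letter 0) (.letter 1)) (.letter 0)) (.letter 2))
          (.star (.mul (.mul (.letter 0) (.letter 1)) (.letter 0))))
        (valid_of_data (by ext t; simp [UWord.letters] <;> tauto) rfl
          (by ext p; simp [UWord.edges, UWord.ends, Dg] <;> tauto))
        (fun n => if n = 0 then x else if n = 1 then y else z)
      simpa [UWord.eval] using this
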